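/- Let H > 0, γ₀ ≥ 0, V > 0, B > 0. Then the limit as T → ∞ of ∫₀ᵀ B·log₂(1 + γ₀/(H² + (−VT/2 + Vt)²)) dt equals (2πB/(V·ln 2))·(√(H² + γ₀) − H). In particular, the total throughput of an infinitely long straight-and-level flyover at speed V is finite. -/

import Mathlib

open Real Filter MeasureTheory intervalIntegral



noncomputable def Gaux (c : ℝ) (x : ℝ) : ℝ :=
  x * Real.log (x ^ 2 + c ^ 2) + 2 * c * Real.arctan (x / c)

lemma atan_lim {c : ℝ} (hc : 0 < c) :
    Tendsto (fun y : ℝ => 2 * c * Real.arctan (y / c)) atTop (nhds (π * c)) := by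
  have h1 : Tendsto (fun y : ℝ => Real.arctan (y / c)) atTop (nhds (π / 2)) :=
    (Real.tendsto_arctan_atTop.mono_right nhdsWithin_le_nhds).comp
      (tendsto_id.atTop_div_const hc)
  have := h1.const_mul (2 * c)
  convert this using 2
  ring

lemma log_lim {H b : ℝ} (hH : 0 < H) (hb : H ≤ b) :
    Tendsto (fun y : ℝ => y * (Real.log (y ^ 2 + b ^ 2) - Real.log (y ^ 2 + H ^ 2)))
      atTop (nhds 0) := by
  have hbpos : 0 < b := lt_of_lt_of_le hH hb
  apply tendsto_of_tendsto_of_tendsto_of_le_of_le' tendsto_const_nhds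
      (Tendsto.div_atTop (tendsto_const_nhds (x := b ^ 2 - H ^ 2)) tendsto_id)
  · filter_upwards [eventually_ge_atTop (0 : ℝ)] with y hy
    have hle : Real.log (y ^ 2 + H ^ 2) ≤ Real.log (y ^ 2 + b ^ 2) := by
      apply Real.log_le_log (by positivity)
      nlinarith
    nlinarith
  · filter_upwards [eventually_ge_atTop (1 : ℝ)] with y hy
    have hy0 : 0 < y := by linarith
    have hden : 0 < y ^ 2 + H ^ 2 := by positivity
    have hnum : 0 < y ^ 2 + b ^ 2 := by positivity
    have hlog : Real.log (y ^ 2 + b ^ 2) - Real.log (y ^ 2 + H ^ 2)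
        = Real.log ((y ^ 2 + b ^ 2) / (y ^ 2 + H ^ 2)) :=
      (Real.log_div (ne_of_gt hnum) (ne_of_gt hden)).symm
    have hle : Real.log ((y ^ 2 + b ^ 2) / (y ^ 2 + H ^ 2))
        ≤ (b ^ 2 - H ^ 2) / (y ^ 2 + H ^ 2) := by
      have := Real.log_le_sub_one_of_pos (div_pos hnum hden)
      have heq : (y ^ 2 + b ^ 2) / (y ^ 2 + H ^ 2) - 1 = (b ^ 2 - H ^ 2) / (y ^ 2 + H ^ 2) := by
        field_simp
        ring
      linarith [heq ▸ this]
    calc y * (Real.log (y ^ 2 + b ^ 2) - Real.log (y ^ 2 + H ^ 2))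
        ≤ y * ((b ^ 2 - H ^ 2) / (y ^ 2 + H ^ 2)) := by
          rw [hlog]; exact mul_le_mul_of_nonneg_left hle hy0.le
      _ ≤ (b ^ 2 - H ^ 2) / y := by
          rw [mul_div_assoc', div_le_div_iff₀ hden hy0]
          have hb2 : H ^ 2 ≤ b ^ 2 := by nlinarith
          nlinarith [mul_nonneg (sub_nonneg.mpr hb2) (sq_nonneg H)]

lemma Gaux_lim {H b : ℝ} (hH : 0 < H) (hb : H ≤ b) :
    Tendsto (fun y : ℝ => Gaux b y - Gaux H y) atTop (nhds (π * b - π * H)) := by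
  have hbpos : 0 < b := lt_of_lt_of_le hH hb
  have heq : (fun y : ℝ => Gaux b y - Gaux H y)
      = fun y : ℝ => y * (Real.log (y ^ 2 + b ^ 2) - Real.log (y ^ 2 + H ^ 2))
          + (2 * b * Real.arctan (y / b) - 2 * H * Real.arctan (y / H)) := by
    funext y; simp only [Gaux]; ring
  rw [heq]
  have := (log_lim hH hb).add ((atan_lim hbpos).sub (atan_lim hH))
  convert this using 2
  ring

lemma Gaux_hasDerivAt {c : ℝ} (hc : 0 < c) (x : ℝ) :
    HasDerivAt (Gaux c) (Real.log (x ^ 2 + c ^ 2) + 2) x := by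
  have hpos : 0 < x ^ 2 + c ^ 2 := by positivity
  have h1 : HasDerivAt (fun x : ℝ => x ^ 2 + c ^ 2) (2 * x) x := by
    simpa using (hasDerivAt_pow 2 x).add_const (c ^ 2)
  have h2 : HasDerivAt (fun x : ℝ => Real.log (x ^ 2 + c ^ 2)) (2 * x / (x ^ 2 + c ^ 2)) x :=
    h1.log (ne_of_gt hpos)
  have h3 : HasDerivAt (fun x : ℝ => x * Real.log (x ^ 2 + c ^ 2))
      (1 * Real.log (x ^ 2 + c ^ 2) + x * (2 * x / (x ^ 2 + c ^ 2))) x :=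
    (hasDerivAt_id x).mul h2
  have h4 : HasDerivAt (fun x : ℝ => x / c) (1 / c) x := (hasDerivAt_id x).div_const c
  have h5 : HasDerivAt (fun x : ℝ => Real.arctan (x / c))
      (1 / (1 + (x / c) ^ 2) * (1 / c)) x :=
    (Real.hasDerivAt_arctan (x / c)).comp (h := fun x : ℝ => x / c) x h4
  have h6 := h3.add ((h5.const_mul (2 * c)))
  refine h6.congr_deriv ?_
  have hc' : c ≠ 0 := ne_of_gt hc
  have h7 : 1 + (x / c) ^ 2 ≠ 0 := by positivity
  field_simp
  ring

lemma Gaux_odd (c y : ℝ) : Gaux c (-y) = - Gaux c y := by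
  simp [Gaux, neg_div, Real.arctan_neg, neg_pow]
  ring

theorem stmt_5 (H γ₀ V B : ℝ) (hH : 0 < H) (hγ : 0 ≤ γ₀) (hV : 0 < V) (hB : 0 < B) :
    Tendsto (fun T : ℝ =>
        ∫ t in (0:ℝ)..T, B * Real.logb 2 (1 + γ₀ / (H ^ 2 + (-(V * T) / 2 + V * t) ^ 2)))
      atTop
      (nhds ((2 * π * B / (V * Real.log 2)) * (Real.sqrt (H ^ 2 + γ₀) - H))) := by
  set b := Real.sqrt (H ^ 2 + γ₀) with hbdef
  have hb2 : b ^ 2 = H ^ 2 + γ₀ := Real.sq_sqrt (by positivity)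
  have hHb : H ≤ b := by nlinarith [Real.sqrt_nonneg (H ^ 2 + γ₀)]
  have hbpos : 0 < b := lt_of_lt_of_le hH hHb
  have key : ∀ x : ℝ, B * Real.logb 2 (1 + γ₀ / (H ^ 2 + x ^ 2))
      = (B / Real.log 2) * (Real.log (x ^ 2 + b ^ 2) - Real.log (x ^ 2 + H ^ 2)) := by
    intro x
    have hden : (0:ℝ) < x ^ 2 + H ^ 2 := by positivity
    have hnum : (0:ℝ) < x ^ 2 + b ^ 2 := by positivity
    have h1 : 1 + γ₀ / (H ^ 2 + x ^ 2) = (x ^ 2 + b ^ 2) / (x ^ 2 + H ^ 2) := by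
      rw [hb2]; field_simp; ring
    rw [h1, Real.logb, Real.log_div (ne_of_gt hnum) (ne_of_gt hden)]
    ring
  simp only [key]
  have hint : ∀ T : ℝ,
      (∫ t in (0:ℝ)..T, (B / Real.log 2) *
        (Real.log ((-(V * T) / 2 + V * t) ^ 2 + b ^ 2)
          - Real.log ((-(V * T) / 2 + V * t) ^ 2 + H ^ 2)))
      = (B / (V * Real.log 2)) * (2 * (Gaux b (V * T / 2) - Gaux H (V * T / 2))) := by
    intro T
    have hderiv : ∀ t ∈ Set.uIcc (0:ℝ) T,
        HasDerivAt (fun t : ℝ => (B / (V * Real.log 2)) *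
            (Gaux b (-(V * T) / 2 + V * t) - Gaux H (-(V * T) / 2 + V * t)))
          ((B / Real.log 2) *
            (Real.log ((-(V * T) / 2 + V * t) ^ 2 + b ^ 2)
              - Real.log ((-(V * T) / 2 + V * t) ^ 2 + H ^ 2))) t := by
      intro t _
      have hlin : HasDerivAt (fun t : ℝ => -(V * T) / 2 + V * t) V t := by
        simpa using ((hasDerivAt_id t).const_mul V).const_add (-(V * T) / 2)
      have hGb := (Gaux_hasDerivAt hbpos (-(V * T) / 2 + V * t)).comp t hlin
      have hGH := (Gaux_hasDerivAt hH (-(V * T) / 2 + V * t)).comp t hlin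
      have h := (hGb.sub hGH).const_mul (B / (V * Real.log 2))
      refine h.congr_deriv ?_
      have hV' : V ≠ 0 := ne_of_gt hV
      have hlog2 : Real.log 2 ≠ 0 := by
        exact Real.log_ne_zero_of_pos_of_ne_one (by norm_num) (by norm_num)
      field_simp
      ring
    have hcont : Continuous (fun t : ℝ => (B / Real.log 2) *
        (Real.log ((-(V * T) / 2 + V * t) ^ 2 + b ^ 2)
          - Real.log ((-(V * T) / 2 + V * t) ^ 2 + H ^ 2))) := by
      apply Continuous.mul continuous_const
      apply Continuous.sub
      · exact Continuous.log (by continuity) (fun t => by positivity)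
      · exact Continuous.log (by continuity) (fun t => by positivity)
    rw [intervalIntegral.integral_eq_sub_of_hasDerivAt hderiv (hcont.intervalIntegrable 0 T)]
    have e1 : -(V * T) / 2 + V * T = V * T / 2 := by ring
    have e2 : -(V * T) / 2 + V * 0 = -(V * T / 2) := by ring
    rw [e1, e2, Gaux_odd, Gaux_odd]
    ring
  simp only [hint]
  have hlim : Tendsto (fun T : ℝ => Gaux b (V * T / 2) - Gaux H (V * T / 2)) atTop
      (nhds (π * b - π * H)) := by
    apply (Gaux_lim hH hHb).comp
    exact Tendsto.atTop_div_const (by norm_num) (tendsto_id.const_mul_atTop hV)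
  have := (hlim.const_mul (2 : ℝ)).const_mul (B / (V * Real.log 2))
  convert this using 2
  ring
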